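/- Let f, m, n ≥ 2 be integers, let k be an integer with 0 < mn − k ≤ k < mn, and let t be a real number. Set a = (f−1)·k·(mn−k)/(m(n−1)). Let x₁ and x₃ be real numbers satisfying x₁ + x₃ = t·mn/k − (f−2)(mn−k) and x₁·x₃ = −a (i.e. x₁, x₃ are the two real roots of x² + ((f−2)(mn−k) − tmn/k)·x − a = 0), ordered so that |x₁| ≥ |x₃|. Then x₁² − (f−1)·x₃² = (f−1)(f−2)·k·(mn−k)/(m(n−1)) holds if and only if t = (k(f−2)/(mn))·(mn − k + √(k(mn−k)/(m(n−1)))) or t = (k(f−2)/(mn))·(mn − k − √(k(mn−k)/(m(n−1)))). -/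

import Mathlib

theorem aux_core (F A x₁ x₃ : ℝ) (hF : 2 ≤ F) (hA : 0 < A)
    (hp : x₁ * x₃ = -((F - 1) * A)) (ho : |x₃| ≤ |x₁|) :
    x₁ ^ 2 - (F - 1) * x₃ ^ 2 = (F - 1) * (F - 2) * A ↔
      x₁ + x₃ = (F - 2) * Real.sqrt A ∨ x₁ + x₃ = -((F - 2) * Real.sqrt A) := by
  have hF1 : 0 < F - 1 := by linarith
  have hF2 : (0:ℝ) ≤ F - 2 := by linarith
  have hD : 0 < (x₁ + x₃) ^ 2 + 4 * ((F - 1) * A) := by positivity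
  have hu0 : 0 ≤ x₁ ^ 2 - x₃ ^ 2 := by
    nlinarith [abs_nonneg x₁, abs_nonneg x₃, sq_abs x₁, sq_abs x₃]
  have hu2 : (x₁ ^ 2 - x₃ ^ 2) ^ 2
      = (x₁ + x₃) ^ 2 * ((x₁ + x₃) ^ 2 + 4 * ((F - 1) * A)) := by
    linear_combination (-4 * (x₁ + x₃) ^ 2) * hp
  have hr : Real.sqrt A ^ 2 = A := Real.sq_sqrt hA.le
  have hcond : (x₁ ^ 2 - (F - 1) * x₃ ^ 2 = (F - 1) * (F - 2) * A) ↔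
      F * (x₁ ^ 2 - x₃ ^ 2) = (F - 2) * ((x₁ + x₃) ^ 2 + 4 * ((F - 1) * A)) := by
    constructor <;> intro h
    · linear_combination 2 * h - 2 * (F - 2) * hp
    · linear_combination (1/2) * h + (F - 2) * hp
  have hs2 : (F * (x₁ ^ 2 - x₃ ^ 2) = (F - 2) * ((x₁ + x₃) ^ 2 + 4 * ((F - 1) * A))) ↔
      (x₁ + x₃) ^ 2 = (F - 2) ^ 2 * A := by
    constructor <;> intro h
    · have h2 : (F ^ 2 * (x₁ + x₃) ^ 2) * ((x₁ + x₃) ^ 2 + 4 * ((F - 1) * A))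
          = ((F - 2) ^ 2 * ((x₁ + x₃) ^ 2 + 4 * ((F - 1) * A)))
              * ((x₁ + x₃) ^ 2 + 4 * ((F - 1) * A)) := by
        linear_combination (-F ^ 2) * hu2 +
          (F * (x₁ ^ 2 - x₃ ^ 2) + (F - 2) * ((x₁ + x₃) ^ 2 + 4 * ((F - 1) * A))) * h
      have h3 := mul_right_cancel₀ (ne_of_gt hD) h2
      have h4 : (4 * (F - 1)) * ((x₁ + x₃) ^ 2) = (4 * (F - 1)) * ((F - 2) ^ 2 * A) := by
        linear_combination h3
      exact mul_left_cancel₀ (by positivity) h4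
    · have hDval : (x₁ + x₃) ^ 2 + 4 * ((F - 1) * A) = F ^ 2 * A := by
        linear_combination h
      have h5 : (x₁ ^ 2 - x₃ ^ 2 - F * (F - 2) * A)
          * (x₁ ^ 2 - x₃ ^ 2 + F * (F - 2) * A) = 0 := by
        linear_combination hu2 + ((x₁ + x₃) ^ 2 + 4 * ((F - 1) * A)) * h
          + (F - 2) ^ 2 * A * hDval
      have hc : 0 ≤ F * (F - 2) * A := by positivity
      have h6 : x₁ ^ 2 - x₃ ^ 2 = F * (F - 2) * A := by
        rcases mul_eq_zero.mp h5 with h6 | h6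
        · linarith
        · linarith
      rw [h6, hDval]; ring
  rw [hcond, hs2]
  constructor
  · intro h
    have h5 : (x₁ + x₃ - (F - 2) * Real.sqrt A) * (x₁ + x₃ + (F - 2) * Real.sqrt A) = 0 := by
      linear_combination h - (F - 2) ^ 2 * hr
    rcases mul_eq_zero.mp h5 with h6 | h6
    · exact Or.inl (by linarith)
    · exact Or.inr (by linarith)
  · rintro (h | h) <;> rw [h] <;> linear_combination ((F - 2) ^ 2) * hr

theorem higmanian_uniformity_core (f m n k : ℤ)
    (hf : 2 ≤ f) (hm : 2 ≤ m) (hn : 2 ≤ n)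
    (hk1 : 0 < m * n - k) (hk2 : m * n - k ≤ k) (hk3 : k < m * n)
    (t x₁ x₃ : ℝ)
    (hsum : x₁ + x₃ = t * ((m : ℝ) * n) / k - ((f : ℝ) - 2) * ((m : ℝ) * n - k))
    (hprod : x₁ * x₃ = -(((f : ℝ) - 1) * k * ((m : ℝ) * n - k) / ((m : ℝ) * ((n : ℝ) - 1))))
    (horder : |x₃| ≤ |x₁|) :
    x₁ ^ 2 - ((f : ℝ) - 1) * x₃ ^ 2 =
        ((f : ℝ) - 1) * ((f : ℝ) - 2) * k * ((m : ℝ) * n - k) / ((m : ℝ) * ((n : ℝ) - 1)) ↔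
      t = ((k : ℝ) * ((f : ℝ) - 2) / ((m : ℝ) * n)) *
            ((m : ℝ) * n - k + Real.sqrt ((k : ℝ) * ((m : ℝ) * n - k) / ((m : ℝ) * ((n : ℝ) - 1)))) ∨
      t = ((k : ℝ) * ((f : ℝ) - 2) / ((m : ℝ) * n)) *
            ((m : ℝ) * n - k - Real.sqrt ((k : ℝ) * ((m : ℝ) * n - k) / ((m : ℝ) * ((n : ℝ) - 1)))) := by
  have hf' : (2:ℝ) ≤ (f:ℝ) := by exact_mod_cast hf
  have hm' : (2:ℝ) ≤ (m:ℝ) := by exact_mod_cast hm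
  have hn' : (2:ℝ) ≤ (n:ℝ) := by exact_mod_cast hn
  have hk1' : (0:ℝ) < (m:ℝ) * n - k := by exact_mod_cast hk1
  have hk2' : (m:ℝ) * n - (k:ℝ) ≤ k := by exact_mod_cast hk2
  have hK : (0:ℝ) < k := lt_of_lt_of_le hk1' hk2'
  have hKne : (k:ℝ) ≠ 0 := ne_of_gt hK
  have hMn1 : (0:ℝ) < (m:ℝ) * ((n:ℝ) - 1) := by nlinarith
  have hMN : (0:ℝ) < (m:ℝ) * n := by nlinarith
  have hMNne : (m:ℝ) * (n:ℝ) ≠ 0 := ne_of_gt hMN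
  have hA : (0:ℝ) < (k:ℝ) * ((m:ℝ) * n - k) / ((m:ℝ) * ((n:ℝ) - 1)) :=
    div_pos (mul_pos hK hk1') hMn1
  have hprod' : x₁ * x₃ =
      -(((f:ℝ) - 1) * ((k:ℝ) * ((m:ℝ) * n - k) / ((m:ℝ) * ((n:ℝ) - 1)))) := by
    rw [hprod]; ring
  have key := aux_core (f:ℝ) ((k:ℝ) * ((m:ℝ) * n - k) / ((m:ℝ) * ((n:ℝ) - 1))) x₁ x₃
    hf' hA hprod' horder
  have hconst : ((f:ℝ) - 1) * ((f:ℝ) - 2) * (k:ℝ) * ((m:ℝ) * n - k) / ((m:ℝ) * ((n:ℝ) - 1))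
      = ((f:ℝ) - 1) * ((f:ℝ) - 2) *
        ((k:ℝ) * ((m:ℝ) * n - k) / ((m:ℝ) * ((n:ℝ) - 1))) := by ring
  rw [hconst, key]
  have hsum' : (x₁ + x₃) * k = t * ((m:ℝ) * n) - ((f:ℝ) - 2) * ((m:ℝ) * n - k) * k := by
    rw [hsum]; field_simp
  have main : ∀ r : ℝ, (x₁ + x₃ = ((f:ℝ) - 2) * r ↔
      t = ((k:ℝ) * ((f:ℝ) - 2) / ((m:ℝ) * n)) * ((m:ℝ) * n - k + r)) := by
    intro r
    rw [show ((k:ℝ) * ((f:ℝ) - 2) / ((m:ℝ) * n)) * ((m:ℝ) * n - k + r)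
        = (k:ℝ) * ((f:ℝ) - 2) * ((m:ℝ) * n - k + r) / ((m:ℝ) * n) from by ring,
      eq_div_iff hMNne]
    constructor <;> intro h
    · linear_combination (k:ℝ) * h - hsum'
    · exact mul_left_cancel₀ hKne (by linear_combination h + hsum')
  apply or_congr
  · exact main _
  · rw [show -(((f:ℝ) - 2) * Real.sqrt ((k:ℝ) * ((m:ℝ) * n - k) / ((m:ℝ) * ((n:ℝ) - 1))))
        = ((f:ℝ) - 2) * (-Real.sqrt ((k:ℝ) * ((m:ℝ) * n - k) / ((m:ℝ) * ((n:ℝ) - 1)))) from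
        by ring,
      show ((m:ℝ) * n - k - Real.sqrt ((k:ℝ) * ((m:ℝ) * n - k) / ((m:ℝ) * ((n:ℝ) - 1))))
        = ((m:ℝ) * n - k + (-Real.sqrt ((k:ℝ) * ((m:ℝ) * n - k) / ((m:ℝ) * ((n:ℝ) - 1))))) from
        by ring]
    exact main _
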